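/- Let 1 < p < ∞ and n ∈ ℕ. There exists a constant c = c(n,p) > 0 such that for every ξ, η ∈ ℝ^n with ξ ≠ η one has c^{−1} (|ξ|² + |η|²)^{(p−2)/2} ≤ | |ξ|^{(p−2)/2} ξ − |η|^{(p−2)/2} η |² / |ξ − η|² ≤ c (|ξ|² + |η|²)^{(p−2)/2}. -/

import Mathlib

open Real

section Scalar

lemma pLap_scalar1 {t r : ℝ} (ht : 0 < t) (h0 : 0 ≤ r) (h1 : r ≤ 1) :
    min t 1 * (1 - r) ≤ 1 - r ^ t := by
  rcases le_total 1 t with h | h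
  · rw [min_eq_right h]
    rcases h0.eq_or_lt with rfl | hr
    · simp [Real.zero_rpow ht.ne']
    · have := Real.rpow_le_rpow_of_exponent_ge hr h1 h
      rw [Real.rpow_one] at this
      linarith
  · rw [min_eq_left h]
    have hb := rpow_one_add_le_one_add_mul_self (s := r - 1) (by linarith) ht.le h
    rw [show (1 : ℝ) + (r - 1) = r by ring] at hb
    nlinarith

lemma pLap_scalar2 {t r : ℝ} (ht : 0 < t) (h0 : 0 ≤ r) (h1 : r ≤ 1) :
    1 - r ^ t ≤ max t 1 * (1 - r) := by
  rcases le_total t 1 with h | h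
  · rw [max_eq_right h]
    rcases h0.eq_or_lt with rfl | hr
    · simp [Real.zero_rpow ht.ne']
    · have := Real.rpow_le_rpow_of_exponent_ge hr h1 h
      rw [Real.rpow_one] at this
      linarith
  · rw [max_eq_left h]
    have hb := one_add_mul_self_le_rpow_one_add (s := r - 1) (by linarith) h
    rw [show (1 : ℝ) + (r - 1) = r by ring] at hb
    nlinarith

lemma pLap_rpow_mul_self {s c : ℝ} (hs : s + 1 ≠ 0) (hc : 0 ≤ c) :
    c ^ s * c = c ^ (s + 1) := by
  rcases hc.eq_or_lt with rfl | hc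
  · simp [Real.zero_rpow hs]
  · rw [Real.rpow_add_one hc.ne']

lemma pLap_L1 {s a b : ℝ} (hs : 0 < s + 1) (hb : 0 ≤ b) (hba : b ≤ a) :
    min (s + 1) 1 * (a ^ s * (a - b)) ≤ a ^ s * a - b ^ s * b := by
  have ha : 0 ≤ a := hb.trans hba
  rcases ha.eq_or_lt with rfl | ha
  · have hb0 : b = 0 := le_antisymm hba hb
    subst hb0; simp
  · set r : ℝ := b / a with hr
    have hr0 : 0 ≤ r := div_nonneg hb ha.le
    have hr1 : r ≤ 1 := (div_le_one ha).2 hba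
    have hbr : b = a * r := by rw [hr]; field_simp [ha.ne']
    have hbs : b ^ s * b = a ^ s * a * r ^ (s + 1) := by
      rw [hbr, Real.mul_rpow ha.le hr0, ← pLap_rpow_mul_self hs.ne' hr0]; ring
    have hab : a ^ s * (a - b) = a ^ s * a * (1 - r) := by rw [hbr]; ring
    have hkey := pLap_scalar1 hs hr0 hr1
    have haa : 0 ≤ a ^ s * a := mul_nonneg (Real.rpow_nonneg ha.le s) ha.le
    rw [hbs, hab]
    nlinarith [mul_le_mul_of_nonneg_left hkey haa]

lemma pLap_L2 {s a b : ℝ} (hs : 0 < s + 1) (hb : 0 ≤ b) (hba : b ≤ a) :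
    a ^ s * a - b ^ s * b ≤ max (s + 1) 2 * (a ^ s * (a - b)) := by
  have ha : 0 ≤ a := hb.trans hba
  rcases ha.eq_or_lt with rfl | ha
  · have hb0 : b = 0 := le_antisymm hba hb
    subst hb0; simp
  · set r : ℝ := b / a with hr
    have hr0 : 0 ≤ r := div_nonneg hb ha.le
    have hr1 : r ≤ 1 := (div_le_one ha).2 hba
    have hbr : b = a * r := by rw [hr]; field_simp [ha.ne']
    have hbs : b ^ s * b = a ^ s * a * r ^ (s + 1) := by
      rw [hbr, Real.mul_rpow ha.le hr0, ← pLap_rpow_mul_self hs.ne' hr0]; ring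
    have hab : a ^ s * (a - b) = a ^ s * a * (1 - r) := by rw [hbr]; ring
    have hkey := pLap_scalar2 hs hr0 hr1
    have haa : 0 ≤ a ^ s * a := mul_nonneg (Real.rpow_nonneg ha.le s) ha.le
    have hmm : max (s + 1) 1 ≤ max (s + 1) 2 := max_le_max le_rfl one_le_two
    have h1r : (0:ℝ) ≤ 1 - r := by linarith
    rw [hbs, hab]
    nlinarith [mul_le_mul_of_nonneg_left hkey haa,
      mul_le_mul_of_nonneg_right (mul_le_mul_of_nonneg_right hmm h1r) haa]

lemma pLap_L3 {s a b : ℝ} (hs : 0 < s + 1) (hb : 0 ≤ b) (hba : b ≤ a) :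
    a ^ s * a + b ^ s * b ≤ 2 * (a ^ s * (a + b)) := by
  have ha : 0 ≤ a := hb.trans hba
  have hbs : b ^ s * b ≤ a ^ s * a := by
    rw [pLap_rpow_mul_self hs.ne' hb, pLap_rpow_mul_self hs.ne' ha]
    exact Real.rpow_le_rpow hb hba hs.le
  have haa : 0 ≤ a ^ s := Real.rpow_nonneg ha s
  nlinarith [mul_nonneg haa hb]

lemma pLap_base_bounds (s : ℝ) {A S : ℝ} (hA : 0 < A) (h1 : A ≤ S) (h2 : S ≤ 2 * A) :
    (2:ℝ) ^ (-|s|) * S ^ s ≤ A ^ s ∧ A ^ s ≤ (2:ℝ) ^ |s| * S ^ s := by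
  have hS : 0 < S := lt_of_lt_of_le hA h1
  have h2A : (2 * A) ^ s = 2 ^ s * A ^ s := Real.mul_rpow (by norm_num) hA.le
  rcases le_or_gt 0 s with hs | hs
  · rw [abs_of_nonneg hs]
    have hAS : A ^ s ≤ S ^ s := Real.rpow_le_rpow hA.le h1 hs
    have hS2 : S ^ s ≤ 2 ^ s * A ^ s := by
      rw [← h2A]; exact Real.rpow_le_rpow hS.le h2 hs
    have h2s : (0:ℝ) < 2 ^ s := Real.rpow_pos_of_pos (by norm_num) s
    have hinv : (2:ℝ) ^ (-s) * 2 ^ s = 1 := by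
      rw [← Real.rpow_add (by norm_num)]; simp
    constructor
    · have := mul_le_mul_of_nonneg_left hS2 (Real.rpow_nonneg (by norm_num : (0:ℝ) ≤ 2) (-s))
      calc (2:ℝ) ^ (-s) * S ^ s ≤ 2 ^ (-s) * (2 ^ s * A ^ s) := this
        _ = A ^ s := by rw [← mul_assoc, hinv, one_mul]
    · have h1s : (1:ℝ) ≤ 2 ^ s := Real.one_le_rpow (by norm_num) hs
      nlinarith [Real.rpow_nonneg hS.le s]
  · rw [abs_of_neg hs, neg_neg]
    have hSA : S ^ s ≤ A ^ s := Real.rpow_le_rpow_of_nonpos hA h1 hs.le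
    have h2S : 2 ^ s * A ^ s ≤ S ^ s := by
      rw [← h2A]; exact Real.rpow_le_rpow_of_nonpos hS h2 hs.le
    have hinv : (2:ℝ) ^ (-s) * 2 ^ s = 1 := by
      rw [← Real.rpow_add (by norm_num)]; simp
    have h2s : (0:ℝ) < 2 ^ s := Real.rpow_pos_of_pos (by norm_num) s
    constructor
    · have h1s : (2:ℝ) ^ s ≤ 1 := Real.rpow_le_one_of_one_le_of_nonpos (by norm_num) hs.le
      have := mul_le_mul_of_nonneg_right h1s (Real.rpow_nonneg hS.le s)
      rw [one_mul] at this
      linarith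
    · have := mul_le_mul_of_nonneg_left h2S (Real.rpow_nonneg (by norm_num : (0:ℝ) ≤ 2) (-s))
      calc A ^ s = 2 ^ (-s) * 2 ^ s * A ^ s := by rw [hinv, one_mul]
        _ = 2 ^ (-s) * (2 ^ s * A ^ s) := by ring
        _ ≤ 2 ^ (-s) * S ^ s := this

end Scalar

section Vector

variable {E : Type*} [NormedAddCommGroup E] [InnerProductSpace ℝ E]

lemma pLap_expand_norm_sq (A B : ℝ) (hA : 0 ≤ A) (hB : 0 ≤ B) (x y : E) :
    ‖A • x - B • y‖ ^ 2
      = A ^ 2 * ‖x‖ ^ 2 - 2 * (A * B * inner ℝ x y) + B ^ 2 * ‖y‖ ^ 2 := by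
  rw [norm_sub_sq_real, real_inner_smul_left, real_inner_smul_right,
    norm_smul, norm_smul]
  simp only [Real.norm_eq_abs, abs_of_nonneg hA, abs_of_nonneg hB, mul_pow]
  ring

lemma pLap_expand_inner (A B : ℝ) (x y : E) :
    (inner ℝ (A • x - B • y) (x - y) : ℝ)
      = A * ‖x‖ ^ 2 - (A + B) * inner ℝ x y + B * ‖y‖ ^ 2 := by
  rw [inner_sub_left, inner_sub_right, inner_sub_right, real_inner_smul_left,
    real_inner_smul_left, real_inner_smul_left, real_inner_smul_left,
    real_inner_self_eq_norm_sq, real_inner_self_eq_norm_sq, real_inner_comm y x]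
  ring

/-- Upper bound for the squared difference. -/
lemma pLap_upper_sq (s : ℝ) (hs : 0 < s + 1) (x y : E) (hba : ‖y‖ ≤ ‖x‖) :
    ‖(‖x‖ ^ s) • x - (‖y‖ ^ s) • y‖ ^ 2
      ≤ (max (s + 1) 2) ^ 2 * ((‖x‖ ^ s) ^ 2 * ‖x - y‖ ^ 2) := by
  rw [pLap_expand_norm_sq (‖x‖ ^ s) (‖y‖ ^ s) (Real.rpow_nonneg (norm_nonneg x) s)
    (Real.rpow_nonneg (norm_nonneg y) s) x y, norm_sub_sq_real]
  set a := ‖x‖ with hadef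
  set b := ‖y‖ with hbdef
  set A := a ^ s with hAdef
  set B := b ^ s with hBdef
  set u : ℝ := inner ℝ x y with hudef
  set M := max (s + 1) 2 with hMdef
  have ha : 0 ≤ a := norm_nonneg x
  have hb : 0 ≤ b := norm_nonneg y
  have hA : 0 ≤ A := Real.rpow_nonneg ha s
  have hB : 0 ≤ B := Real.rpow_nonneg hb s
  have hab : 0 ≤ a - b := sub_nonneg.2 hba
  have hM2 : (2:ℝ) ≤ M := le_max_right _ _
  have hu := abs_real_inner_le_norm x y
  have hu1 : u ≤ a * b := (abs_le.1 hu).2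
  have hu2 : -(a * b) ≤ u := (abs_le.1 hu).1
  have hL1 := pLap_L1 hs hb hba
  have hL2 := pLap_L2 hs hb hba
  have hL3 := pLap_L3 hs hb hba
  have hposd : 0 ≤ A * a - B * b := by
    have hmin : 0 ≤ min (s + 1) 1 := le_min hs.le zero_le_one
    nlinarith [mul_nonneg hA hab, mul_nonneg hmin (mul_nonneg hA hab)]
  have hE1 : (A * a - B * b) ^ 2 ≤ (M * (A * (a - b))) ^ 2 :=
    pow_le_pow_left₀ hposd hL2 2
  have hE2 : (A * a + B * b) ^ 2 ≤ (M * (A * (a + b))) ^ 2 := by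
    have h3 : A * a + B * b ≤ M * (A * (a + b)) := by
      have : (2:ℝ) * (A * (a + b)) ≤ M * (A * (a + b)) :=
        mul_le_mul_of_nonneg_right hM2 (mul_nonneg hA (by linarith))
      linarith
    exact pow_le_pow_left₀ (by positivity) h3 2
  rcases le_or_gt 0 (2 * M ^ 2 * A ^ 2 - 2 * (A * B)) with hc | hc
  · nlinarith [hE1, mul_nonneg hc (sub_nonneg.2 hu1)]
  · nlinarith [hE2, mul_nonpos_of_nonpos_of_nonneg hc.le (by linarith : (0:ℝ) ≤ u + a * b)]

/-- Lower bound for the inner product (monotonicity). -/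
lemma pLap_lower_inner (s : ℝ) (hs : 0 < s + 1) (x y : E) (hba : ‖y‖ ≤ ‖x‖) :
    min (s + 1) (1/2) * ((‖x‖ ^ s) * ‖x - y‖ ^ 2)
      ≤ (inner ℝ ((‖x‖ ^ s) • x - (‖y‖ ^ s) • y) (x - y) : ℝ) := by
  rw [pLap_expand_inner, norm_sub_sq_real]
  set a := ‖x‖ with hadef
  set b := ‖y‖ with hbdef
  set A := a ^ s with hAdef
  set B := b ^ s with hBdef
  set u : ℝ := inner ℝ x y with hudef
  set m := min (s + 1) (1/2 : ℝ) with hmdef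
  have ha : 0 ≤ a := norm_nonneg x
  have hb : 0 ≤ b := norm_nonneg y
  have hA : 0 ≤ A := Real.rpow_nonneg ha s
  have hB : 0 ≤ B := Real.rpow_nonneg hb s
  have hab : 0 ≤ a - b := sub_nonneg.2 hba
  have hu1 : u ≤ a * b := (abs_le.1 (abs_real_inner_le_norm x y)).2
  have habu : 0 ≤ a * b - u := by linarith
  have hm1 : m ≤ min (s + 1) 1 := min_le_min le_rfl (by norm_num)
  have hm2 : m ≤ 1/2 := min_le_right _ _
  have hL1 := pLap_L1 hs hb hba
  have H1 : m * (A * (a - b)) * (a - b) ≤ min (s + 1) 1 * (A * (a - b)) * (a - b) :=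
    mul_le_mul_of_nonneg_right
      (mul_le_mul_of_nonneg_right hm1 (mul_nonneg hA hab)) hab
  have H2 : min (s + 1) 1 * (A * (a - b)) * (a - b) ≤ (A * a - B * b) * (a - b) :=
    mul_le_mul_of_nonneg_right hL1 hab
  have H3 : m * (A * (a * b - u)) ≤ 1/2 * (A * (a * b - u)) :=
    mul_le_mul_of_nonneg_right hm2 (mul_nonneg hA habu)
  have H4 : 0 ≤ B * (a * b - u) := mul_nonneg hB habu
  nlinarith [H1, H2, H3, H4]

/-- Lower bound for the squared difference. -/
lemma pLap_lower_sq (s : ℝ) (hs : 0 < s + 1) (x y : E) (hne : x ≠ y) (hba : ‖y‖ ≤ ‖x‖) :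
    (min (s + 1) (1/2)) ^ 2 * ((‖x‖ ^ s) ^ 2 * ‖x - y‖ ^ 2)
      ≤ ‖(‖x‖ ^ s) • x - (‖y‖ ^ s) • y‖ ^ 2 := by
  set d := (‖x‖ ^ s) • x - (‖y‖ ^ s) • y with hddef
  set m := min (s + 1) (1/2 : ℝ) with hmdef
  have hm : 0 < m := lt_min hs (by norm_num)
  have hA : 0 ≤ ‖x‖ ^ s := Real.rpow_nonneg (norm_nonneg x) s
  have hxy : 0 < ‖x - y‖ := by
    rw [norm_pos_iff, sub_ne_zero]; exact hne
  have h1 := pLap_lower_inner s hs x y hba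
  have h2 : (inner ℝ d (x - y) : ℝ) ≤ ‖d‖ * ‖x - y‖ := real_inner_le_norm d (x - y)
  have h3 : m * (‖x‖ ^ s * ‖x - y‖) * ‖x - y‖ ≤ ‖d‖ * ‖x - y‖ := by
    calc m * (‖x‖ ^ s * ‖x - y‖) * ‖x - y‖ = m * (‖x‖ ^ s * ‖x - y‖ ^ 2) := by ring
      _ ≤ (inner ℝ d (x - y) : ℝ) := h1
      _ ≤ ‖d‖ * ‖x - y‖ := h2
  have h4 : m * (‖x‖ ^ s * ‖x - y‖) ≤ ‖d‖ := le_of_mul_le_mul_right h3 hxy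
  have h5 := pow_le_pow_left₀ (by positivity) h4 2
  calc m ^ 2 * ((‖x‖ ^ s) ^ 2 * ‖x - y‖ ^ 2)
      = (m * (‖x‖ ^ s * ‖x - y‖)) ^ 2 := by ring
    _ ≤ ‖d‖ ^ 2 := h5

end Vector

/-- Let `1 < p < ∞` and `n ∈ ℕ`. There is a constant `c = c(n,p) > 0`
such that for every `ξ ≠ η` in `ℝ^n`,
`c⁻¹ (|ξ|² + |η|²)^((p−2)/2) ≤ | |ξ|^((p−2)/2) ξ − |η|^((p−2)/2) η |² / |ξ − η|²
  ≤ c (|ξ|² + |η|²)^((p−2)/2)`. -/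
theorem stmt_1 (n : ℕ) (p : ℝ) (hp : 1 < p) :
    ∃ c : ℝ, 0 < c ∧ ∀ ξ η : EuclideanSpace ℝ (Fin n), ξ ≠ η →
      c⁻¹ * (‖ξ‖ ^ 2 + ‖η‖ ^ 2) ^ ((p - 2) / 2) ≤
        ‖(‖ξ‖ ^ ((p - 2) / 2)) • ξ - (‖η‖ ^ ((p - 2) / 2)) • η‖ ^ 2 / ‖ξ - η‖ ^ 2 ∧
      ‖(‖ξ‖ ^ ((p - 2) / 2)) • ξ - (‖η‖ ^ ((p - 2) / 2)) • η‖ ^ 2 / ‖ξ - η‖ ^ 2 ≤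
        c * (‖ξ‖ ^ 2 + ‖η‖ ^ 2) ^ ((p - 2) / 2) := by
  set s := (p - 2) / 2 with hsdef
  have hs : 0 < s + 1 := by rw [hsdef]; linarith
  set m := min (s + 1) (1/2 : ℝ) with hmdef
  set M := max (s + 1) (2 : ℝ) with hMdef
  have hm : 0 < m := lt_min hs (by norm_num)
  have hM : 0 < M := lt_of_lt_of_le two_pos (le_max_right _ _)
  set K := max (M ^ 2) ((m ^ 2)⁻¹) with hKdef
  have hK : 0 < K := lt_of_lt_of_le (pow_pos hM 2) (le_max_left _ _)
  have h2s : (0:ℝ) < 2 ^ |s| := Real.rpow_pos_of_pos two_pos _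
  refine ⟨2 ^ |s| * K, by positivity, ?_⟩
  have H : ∀ x y : EuclideanSpace ℝ (Fin n), x ≠ y → ‖y‖ ≤ ‖x‖ →
      (2 ^ |s| * K)⁻¹ * (‖x‖ ^ 2 + ‖y‖ ^ 2) ^ s ≤
        ‖(‖x‖ ^ s) • x - (‖y‖ ^ s) • y‖ ^ 2 / ‖x - y‖ ^ 2 ∧
      ‖(‖x‖ ^ s) • x - (‖y‖ ^ s) • y‖ ^ 2 / ‖x - y‖ ^ 2 ≤
        2 ^ |s| * K * (‖x‖ ^ 2 + ‖y‖ ^ 2) ^ s := by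
    intro x y hne hba
    have hxy : (0:ℝ) < ‖x - y‖ ^ 2 := by
      have : (0:ℝ) < ‖x - y‖ := by rw [norm_pos_iff, sub_ne_zero]; exact hne
      positivity
    have ha : 0 < ‖x‖ := by
      rcases (norm_nonneg x).eq_or_lt with h | h
      · exfalso
        have hx0 : x = 0 := norm_eq_zero.1 h.symm
        have hy0 : y = 0 := norm_eq_zero.1 (le_antisymm (by rw [← h] at hba; exact hba) (norm_nonneg y))
        exact hne (hx0.trans hy0.symm)
      · exact h
    have hA2 : ((‖x‖ : ℝ) ^ s) ^ 2 = ((‖x‖ : ℝ) ^ 2) ^ s := by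
      rw [← Real.rpow_natCast (‖x‖ ^ s) 2, ← Real.rpow_natCast ‖x‖ 2,
        ← Real.rpow_mul (norm_nonneg x), ← Real.rpow_mul (norm_nonneg x)]
      norm_num [mul_comm]
    have hS1 : (‖x‖:ℝ) ^ 2 ≤ ‖x‖ ^ 2 + ‖y‖ ^ 2 := le_add_of_nonneg_right (by positivity)
    have hS2 : (‖x‖:ℝ) ^ 2 + ‖y‖ ^ 2 ≤ 2 * ‖x‖ ^ 2 := by
      have := pow_le_pow_left₀ (norm_nonneg y) hba 2
      linarith
    obtain ⟨hb1, hb2⟩ := pLap_base_bounds s (by positivity : (0:ℝ) < ‖x‖ ^ 2) hS1 hS2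
    have hup := pLap_upper_sq s hs x y hba
    have hlo := pLap_lower_sq s hs x y hne hba
    set Q := ‖(‖x‖ ^ s) • x - (‖y‖ ^ s) • y‖ ^ 2 / ‖x - y‖ ^ 2 with hQdef
    have hQup : Q ≤ M ^ 2 * ((‖x‖ ^ 2 : ℝ) ^ s) := by
      rw [hQdef, div_le_iff₀ hxy, ← hA2]
      calc ‖(‖x‖ ^ s) • x - (‖y‖ ^ s) • y‖ ^ 2
          ≤ M ^ 2 * ((‖x‖ ^ s) ^ 2 * ‖x - y‖ ^ 2) := hup
        _ = M ^ 2 * (‖x‖ ^ s) ^ 2 * ‖x - y‖ ^ 2 := by ring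
    have hQlo : m ^ 2 * ((‖x‖ ^ 2 : ℝ) ^ s) ≤ Q := by
      rw [hQdef, le_div_iff₀ hxy, ← hA2]
      calc m ^ 2 * (‖x‖ ^ s) ^ 2 * ‖x - y‖ ^ 2
          = m ^ 2 * ((‖x‖ ^ s) ^ 2 * ‖x - y‖ ^ 2) := by ring
        _ ≤ ‖(‖x‖ ^ s) • x - (‖y‖ ^ s) • y‖ ^ 2 := hlo
    have hSpos : (0:ℝ) < (‖x‖ ^ 2 + ‖y‖ ^ 2 : ℝ) ^ s :=
      Real.rpow_pos_of_pos (by positivity) s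
    constructor
    · -- lower bound
      have hcinv : (2 ^ |s| * K)⁻¹ ≤ m ^ 2 * (2:ℝ) ^ (-|s|) := by
        rw [mul_inv, ← Real.rpow_neg (by norm_num : (0:ℝ) ≤ 2)]
        have hKinv : K⁻¹ ≤ m ^ 2 := by
          rw [← inv_inv (m ^ 2)]
          exact inv_anti₀ (by positivity) (le_max_right _ _)
        have h2inv : (0:ℝ) ≤ (2:ℝ) ^ (-|s|) := (Real.rpow_pos_of_pos two_pos _).le
        calc (2:ℝ) ^ (-|s|) * K⁻¹ ≤ (2:ℝ) ^ (-|s|) * m ^ 2 :=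
              mul_le_mul_of_nonneg_left hKinv h2inv
          _ = m ^ 2 * (2:ℝ) ^ (-|s|) := mul_comm _ _
      calc (2 ^ |s| * K)⁻¹ * (‖x‖ ^ 2 + ‖y‖ ^ 2 : ℝ) ^ s
          ≤ m ^ 2 * (2:ℝ) ^ (-|s|) * (‖x‖ ^ 2 + ‖y‖ ^ 2 : ℝ) ^ s :=
            mul_le_mul_of_nonneg_right hcinv hSpos.le
        _ = m ^ 2 * ((2:ℝ) ^ (-|s|) * (‖x‖ ^ 2 + ‖y‖ ^ 2 : ℝ) ^ s) := by ring
        _ ≤ m ^ 2 * ((‖x‖ ^ 2 : ℝ) ^ s) := mul_le_mul_of_nonneg_left hb1 (by positivity)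
        _ ≤ Q := hQlo
    · -- upper bound
      have hMK : M ^ 2 ≤ K := le_max_left _ _
      calc Q ≤ M ^ 2 * ((‖x‖ ^ 2 : ℝ) ^ s) := hQup
        _ ≤ M ^ 2 * ((2:ℝ) ^ |s| * (‖x‖ ^ 2 + ‖y‖ ^ 2 : ℝ) ^ s) :=
            mul_le_mul_of_nonneg_left hb2 (by positivity)
        _ ≤ K * ((2:ℝ) ^ |s| * (‖x‖ ^ 2 + ‖y‖ ^ 2 : ℝ) ^ s) :=
            mul_le_mul_of_nonneg_right hMK (by positivity)
        _ = 2 ^ |s| * K * (‖x‖ ^ 2 + ‖y‖ ^ 2 : ℝ) ^ s := by ring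
  intro ξ η hne
  rcases le_total ‖η‖ ‖ξ‖ with hba | hba
  · exact H ξ η hne hba
  · have := H η ξ (Ne.symm hne) hba
    rwa [norm_sub_rev η ξ, norm_sub_rev ((‖η‖ ^ s) • η) ((‖ξ‖ ^ s) • ξ),
      add_comm (‖η‖ ^ 2 : ℝ) (‖ξ‖ ^ 2 : ℝ)] at this
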